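/- Let τ be a stopping time on a filtered probability space and let L = (L¹, …, L^N) be an N-tuple of nondecreasing continuous adapted processes on [0, τ) started from zero. Let S be the set of N-tuples F = (F¹, …, F^N) of nondecreasing continuous adapted processes on [0, τ) started from zero such that almost surely F^i(t) − F^i(s) ≤ L^i(t) − L^i(s) for all 0 ≤ s ≤ t < τ and all i. Order S by F ≪ G iff almost surely F^i(t) − F^i(s) ≤ G^i(t) − G^i(s) for all 0 ≤ s ≤ t < τ and all i. Then (S, ≪) is a complete lattice: every subset of S has a least upper bound and a greatest lower bound in S. -/

import Mathlib

open Set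
open scoped ENNReal

/-- The time domain `[0, τ)` for a (deterministic) horizon `τ ∈ [0, ∞]`. -/
def IncDom (τ : ℝ≥0∞) : Set ℝ := {t : ℝ | 0 ≤ t ∧ ENNReal.ofReal t < τ}

/-- An `N`-tuple `F` of nondecreasing continuous paths on `[0, τ)`, started from zero,
whose increments are dominated by those of the fixed tuple `L`. -/
def GoodTuple (N : ℕ) (τ : ℝ≥0∞) (L F : Fin N → ℝ → ℝ) : Prop :=
  ∀ i, F i 0 = 0 ∧ ContinuousOn (F i) (IncDom τ) ∧ MonotoneOn (F i) (IncDom τ) ∧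
    ∀ s ∈ IncDom τ, ∀ t ∈ IncDom τ, s ≤ t → F i t - F i s ≤ L i t - L i s

/-- The partial order `F ≪ G`: every increment of `F` is dominated by the corresponding
increment of `G`. -/
def TupleLE (N : ℕ) (τ : ℝ≥0∞) (F G : Fin N → ℝ → ℝ) : Prop :=
  ∀ i, ∀ s ∈ IncDom τ, ∀ t ∈ IncDom τ, s ≤ t → F i t - F i s ≤ G i t - G i s

namespace IncLatticeAux

variable {N : ℕ}

lemma mem_incDom_of {τ : ℝ≥0∞} {t s : ℝ} (ht : t ∈ IncDom τ) (hs0 : 0 ≤ s) (hst : s ≤ t) :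
    s ∈ IncDom τ :=
  ⟨hs0, lt_of_le_of_lt (ENNReal.ofReal_le_ofReal hst) ht.2⟩

/-- Partition sums over `[0, t]` with functions chosen from `K`. -/
def PSums (K : Set (Fin N → ℝ → ℝ)) (i : Fin N) (t : ℝ) : Set ℝ :=
  {x | ∃ n, ∃ p : Fin (n+1) → ℝ, ∃ F : Fin n → (Fin N → ℝ → ℝ),
    Monotone p ∧ p 0 = 0 ∧ p (Fin.last n) = t ∧ (∀ j, F j ∈ K) ∧
    x = ∑ j : Fin n, (F j i (p j.succ) - F j i (p j.castSucc))}

lemma zero_mem_psums_zero (K : Set (Fin N → ℝ → ℝ)) (i : Fin N) :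
    (0:ℝ) ∈ PSums K i 0 :=
  ⟨0, fun _ => 0, fun j => j.elim0, monotone_const, rfl, rfl, fun j => j.elim0, by simp⟩

lemma psums_zero (K : Set (Fin N → ℝ → ℝ)) (i : Fin N) : PSums K i 0 = {0} := by
  apply Set.eq_singleton_iff_unique_mem.mpr
  refine ⟨zero_mem_psums_zero K i, ?_⟩
  rintro x ⟨n, p, F, hp, hp0, hpl, hF, rfl⟩
  apply Finset.sum_eq_zero
  intro j _
  have hall : ∀ k : Fin (n+1), p k = 0 := fun k =>
    le_antisymm (hpl ▸ hp (Fin.le_last k)) (hp0 ▸ hp (Fin.zero_le k))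
  rw [hall j.succ, hall j.castSucc, sub_self]

lemma telescope (g : ℝ → ℝ) : ∀ {m : ℕ} (q : Fin (m+1) → ℝ),
    ∑ j : Fin m, (g (q j.succ) - g (q j.castSucc)) = g (q (Fin.last m)) - g (q 0) := by
  intro m
  induction m with
  | zero => intro q; simp [Fin.last]
  | succ m ih =>
    intro q
    rw [Fin.sum_univ_castSucc]
    have h1 : ∀ j : Fin m,
        g (q (Fin.castSucc j).succ) - g (q (Fin.castSucc j).castSucc)
          = g ((q ∘ Fin.castSucc) j.succ) - g ((q ∘ Fin.castSucc) j.castSucc) := by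
      intro j
      simp [Function.comp]
    calc (∑ j : Fin m, (g (q (Fin.castSucc j).succ) - g (q (Fin.castSucc j).castSucc)))
          + (g (q (Fin.last m).succ) - g (q (Fin.last m).castSucc))
        = (∑ j : Fin m, (g ((q ∘ Fin.castSucc) j.succ) - g ((q ∘ Fin.castSucc) j.castSucc)))
          + (g (q (Fin.last m).succ) - g (q (Fin.last m).castSucc)) := by
          rw [Finset.sum_congr rfl (fun j _ => h1 j)]
      _ = (g ((q ∘ Fin.castSucc) (Fin.last m)) - g ((q ∘ Fin.castSucc) 0))
          + (g (q (Fin.last m).succ) - g (q (Fin.last m).castSucc)) := by rw [ih]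
      _ = g (q (Fin.last (m+1))) - g (q 0) := by
          simp [Function.comp, Fin.succ_last]

lemma snoc_monotone {n : ℕ} {p : Fin (n+1) → ℝ} (hp : Monotone p) {t : ℝ}
    (h : p (Fin.last n) ≤ t) : Monotone (Fin.snoc p t : Fin (n+2) → ℝ) := by
  intro a b hab
  induction b using Fin.lastCases with
  | last =>
    rw [Fin.snoc_last]
    induction a using Fin.lastCases with
    | last => rw [Fin.snoc_last]
    | cast k =>
      rw [Fin.snoc_castSucc]
      exact le_trans (hp (Fin.le_last k)) h
  | cast kb =>
    induction a using Fin.lastCases with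
    | last => exact absurd hab (not_le.2 (Fin.castSucc_lt_last kb))
    | cast ka =>
      rw [Fin.snoc_castSucc, Fin.snoc_castSucc]
      exact hp (Fin.castSucc_le_castSucc_iff.mp hab)

lemma append {K : Set (Fin N → ℝ → ℝ)} {i : Fin N} {s t y : ℝ}
    (hy : y ∈ PSums K i s) (hst : s ≤ t) {F : Fin N → ℝ → ℝ} (hF : F ∈ K) :
    y + (F i t - F i s) ∈ PSums K i t := by
  obtain ⟨n, p, Fs, hp, hp0, hpl, hFs, rfl⟩ := hy
  refine ⟨n+1, Fin.snoc p t, Fin.snoc Fs F, snoc_monotone hp (hpl ▸ hst), ?_, ?_, ?_, ?_⟩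
  · rw [← Fin.castSucc_zero, Fin.snoc_castSucc]; exact hp0
  · rw [Fin.snoc_last]
  · intro j
    induction j using Fin.lastCases with
    | last => rw [Fin.snoc_last]; exact hF
    | cast k => rw [Fin.snoc_castSucc]; exact hFs k
  · rw [Fin.sum_univ_castSucc]
    congr 1
    · apply Finset.sum_congr rfl
      intro j _
      simp only [Fin.snoc_castSucc, Fin.succ_castSucc]
    · rw [Fin.succ_last]
      simp only [Fin.snoc_last, Fin.snoc_castSucc, hpl]

lemma minmax_split (f : ℝ → ℝ) (a b s : ℝ) :
    f b - f a = (f (min b s) - f (min a s)) + (f (max b s) - f (max a s)) := by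
  rcases le_total a s with h1 | h1 <;> rcases le_total b s with h2 | h2
  · rw [min_eq_left h2, min_eq_left h1, max_eq_right h2, max_eq_right h1]; ring
  · rw [min_eq_right h2, min_eq_left h1, max_eq_left h2, max_eq_right h1]; ring
  · rw [min_eq_left h2, min_eq_right h1, max_eq_right h2, max_eq_left h1]; ring
  · rw [min_eq_right h2, min_eq_right h1, max_eq_left h2, max_eq_left h1]; ring

lemma split {K : Set (Fin N → ℝ → ℝ)} {i : Fin N} {s t x : ℝ}
    (hx : x ∈ PSums K i t) (hs0 : 0 ≤ s) (hst : s ≤ t) :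
    ∃ y ∈ PSums K i s, ∃ m, ∃ q : Fin (m+1) → ℝ, ∃ Fs : Fin m → (Fin N → ℝ → ℝ),
      Monotone q ∧ q 0 = s ∧ q (Fin.last m) = t ∧ (∀ j, Fs j ∈ K) ∧
      x = y + ∑ j : Fin m, (Fs j i (q j.succ) - Fs j i (q j.castSucc)) := by
  obtain ⟨n, p, F, hp, hp0, hpl, hF, rfl⟩ := hx
  refine ⟨∑ j : Fin n, (F j i (min (p j.succ) s) - F j i (min (p j.castSucc) s)),
    ⟨n, fun j => min (p j) s, F, fun a b hab => min_le_min (hp hab) le_rfl,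
      by simp only [hp0]; exact min_eq_left hs0,
      by simp only [hpl]; exact min_eq_right hst, hF, rfl⟩,
    n, fun j => max (p j) s, F, fun a b hab => max_le_max (hp hab) le_rfl,
    by simp only [hp0]; exact max_eq_right hs0,
    by simp only [hpl]; exact max_eq_left hst, hF, ?_⟩
  rw [← Finset.sum_add_distrib]
  apply Finset.sum_congr rfl
  intro j _
  exact minmax_split (F j i) (p j.castSucc) (p j.succ) s

lemma sum_le {τ : ℝ≥0∞} {K : Set (Fin N → ℝ → ℝ)} {i : Fin N} {m : ℕ}
    (q : Fin (m+1) → ℝ) (Fs : Fin m → (Fin N → ℝ → ℝ))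
    (hq : Monotone q) (h0 : 0 ≤ q 0) (hlast : q (Fin.last m) ∈ IncDom τ)
    (hFs : ∀ j, Fs j ∈ K) {g : ℝ → ℝ}
    (hg : ∀ F ∈ K, ∀ a ∈ IncDom τ, ∀ b ∈ IncDom τ, a ≤ b → F i b - F i a ≤ g b - g a) :
    ∑ j : Fin m, (Fs j i (q j.succ) - Fs j i (q j.castSucc)) ≤ g (q (Fin.last m)) - g (q 0) := by
  have hmem : ∀ j : Fin (m+1), q j ∈ IncDom τ := fun j =>
    mem_incDom_of hlast (h0.trans (hq (Fin.zero_le j))) (hq (Fin.le_last j))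
  calc ∑ j : Fin m, (Fs j i (q j.succ) - Fs j i (q j.castSucc))
      ≤ ∑ j : Fin m, (g (q j.succ) - g (q j.castSucc)) := by
        apply Finset.sum_le_sum
        intro j _
        exact hg (Fs j) (hFs j) _ (hmem j.castSucc) _ (hmem j.succ)
          (hq (Fin.castSucc_lt_succ (i := j)).le)
    _ = g (q (Fin.last m)) - g (q 0) := telescope g q

lemma sum_ge {τ : ℝ≥0∞} {K : Set (Fin N → ℝ → ℝ)} {i : Fin N} {m : ℕ}
    (q : Fin (m+1) → ℝ) (Fs : Fin m → (Fin N → ℝ → ℝ))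
    (hq : Monotone q) (h0 : 0 ≤ q 0) (hlast : q (Fin.last m) ∈ IncDom τ)
    (hFs : ∀ j, Fs j ∈ K) {g : ℝ → ℝ}
    (hg : ∀ F ∈ K, ∀ a ∈ IncDom τ, ∀ b ∈ IncDom τ, a ≤ b → g b - g a ≤ F i b - F i a) :
    g (q (Fin.last m)) - g (q 0) ≤ ∑ j : Fin m, (Fs j i (q j.succ) - Fs j i (q j.castSucc)) := by
  have hmem : ∀ j : Fin (m+1), q j ∈ IncDom τ := fun j =>
    mem_incDom_of hlast (h0.trans (hq (Fin.zero_le j))) (hq (Fin.le_last j))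
  calc g (q (Fin.last m)) - g (q 0)
      = ∑ j : Fin m, (g (q j.succ) - g (q j.castSucc)) := (telescope g q).symm
    _ ≤ ∑ j : Fin m, (Fs j i (q j.succ) - Fs j i (q j.castSucc)) := by
        apply Finset.sum_le_sum
        intro j _
        exact hg (Fs j) (hFs j) _ (hmem j.castSucc) _ (hmem j.succ)
          (hq (Fin.castSucc_lt_succ (i := j)).le)

lemma contOn_of_incr_dom {f g : ℝ → ℝ} {D : Set ℝ} (hg : ContinuousOn g D)
    (h : ∀ s ∈ D, ∀ t ∈ D, s ≤ t → 0 ≤ f t - f s ∧ f t - f s ≤ g t - g s) :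
    ContinuousOn f D := by
  intro x hx
  have key : ∀ t ∈ D, dist (f t) (f x) ≤ dist (g t) (g x) := by
    intro t ht
    rcases le_total t x with hle | hle
    · obtain ⟨h1, h2⟩ := h t ht x hx hle
      calc dist (f t) (f x) = f x - f t := by
            rw [Real.dist_eq, abs_sub_comm, abs_of_nonneg h1]
        _ ≤ g x - g t := h2
        _ ≤ |g x - g t| := le_abs_self _
        _ = dist (g t) (g x) := by rw [Real.dist_eq, abs_sub_comm]
    · obtain ⟨h1, h2⟩ := h x hx t ht hle
      calc dist (f t) (f x) = f t - f x := by rw [Real.dist_eq, abs_of_nonneg h1]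
        _ ≤ g t - g x := h2
        _ ≤ |g t - g x| := le_abs_self _
        _ = dist (g t) (g x) := by rw [Real.dist_eq]
  have hgx := hg x hx
  rw [ContinuousWithinAt, Metric.tendsto_nhdsWithin_nhds] at hgx ⊢
  intro ε hε
  obtain ⟨δ, hδ, hδ'⟩ := hgx ε hε
  exact ⟨δ, hδ, fun {t} ht hd => lt_of_le_of_lt (key t ht) (hδ' ht hd)⟩

end IncLatticeAux

open IncLatticeAux in
/-- The set of increment-dominated tuples is a complete lattice under `≪`: every subset
has a least upper bound and a greatest lower bound within the set. -/
theorem increment_dominated_complete_lattice {N : ℕ} (τ : ℝ≥0∞) (hτ : 0 < τ)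
    (L : Fin N → ℝ → ℝ) (hL : GoodTuple N τ L L) :
    ∀ K ⊆ {F : Fin N → ℝ → ℝ | GoodTuple N τ L F},
      (∃ Fsup ∈ {F : Fin N → ℝ → ℝ | GoodTuple N τ L F},
        (∀ F ∈ K, TupleLE N τ F Fsup) ∧
        ∀ G ∈ {F : Fin N → ℝ → ℝ | GoodTuple N τ L F},
          (∀ F ∈ K, TupleLE N τ F G) → TupleLE N τ Fsup G) ∧
      (∃ Finf ∈ {F : Fin N → ℝ → ℝ | GoodTuple N τ L F},
        (∀ F ∈ K, TupleLE N τ Finf F) ∧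
        ∀ G ∈ {F : Fin N → ℝ → ℝ | GoodTuple N τ L F},
          (∀ F ∈ K, TupleLE N τ G F) → TupleLE N τ G Finf) := by
  intro K hK
  have h0D : (0:ℝ) ∈ IncDom τ := ⟨le_refl 0, by simpa using hτ⟩
  rcases K.eq_empty_or_nonempty with rfl | ⟨F0, hF0⟩
  · constructor
    · -- sup of empty family: the zero tuple
      refine ⟨fun _ _ => 0, ?_, ?_, ?_⟩
      · intro i
        refine ⟨rfl, continuousOn_const, monotoneOn_const, ?_⟩
        intro s hs t ht hst
        simpa using sub_nonneg.2 ((hL i).2.2.1 hs ht hst)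
      · rintro F ⟨⟩
      · intro G hG _ i s hs t ht hst
        simpa using sub_nonneg.2 ((hG i).2.2.1 hs ht hst)
    · -- inf of empty family: L itself
      refine ⟨L, hL, ?_, ?_⟩
      · rintro F ⟨⟩
      · intro G hG _ i s hs t ht hst
        exact (hG i).2.2.2 s hs t ht hst
  · -- nonempty family
    have hGL : ∀ i, ∀ F ∈ K, ∀ a ∈ IncDom τ, ∀ b ∈ IncDom τ, a ≤ b →
        F i b - F i a ≤ L i b - L i a := fun i F hF => (hK hF i).2.2.2
    have hGzero : ∀ i, ∀ F ∈ K, ∀ a ∈ IncDom τ, ∀ b ∈ IncDom τ, a ≤ b →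
        (0:ℝ) - 0 ≤ F i b - F i a := by
      intro i F hF a ha b hb hab
      simpa using sub_nonneg.2 ((hK hF i).2.2.1 ha hb hab)
    have hne : ∀ (i : Fin N) (t : ℝ), 0 ≤ t → (PSums K i t).Nonempty := by
      intro i t h0t
      exact ⟨_, append (zero_mem_psums_zero K i) h0t hF0⟩
    have hbddA : ∀ (i : Fin N), ∀ t ∈ IncDom τ, BddAbove (PSums K i t) := by
      intro i t ht
      refine ⟨L i t, ?_⟩
      rintro x ⟨n, p, F, hp, hp0, hpl, hF, rfl⟩
      have := sum_le (τ := τ) p F hp (le_of_eq hp0.symm) (by rw [hpl]; exact ht) hF (hGL i)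
      rw [hp0, hpl, (hL i).1, sub_zero] at this
      exact this
    have hbddB : ∀ (i : Fin N), ∀ t ∈ IncDom τ, BddBelow (PSums K i t) := by
      intro i t ht
      refine ⟨0, ?_⟩
      rintro x ⟨n, p, F, hp, hp0, hpl, hF, rfl⟩
      have := sum_ge (τ := τ) p F hp (le_of_eq hp0.symm) (by rw [hpl]; exact ht) hF
        (g := fun _ => (0:ℝ)) (hGzero i)
      simpa using this
    -- key estimates for the supremum candidate
    have supLe : ∀ (i : Fin N) (g : ℝ → ℝ),
        (∀ F ∈ K, ∀ a ∈ IncDom τ, ∀ b ∈ IncDom τ, a ≤ b → F i b - F i a ≤ g b - g a) →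
        ∀ s ∈ IncDom τ, ∀ t ∈ IncDom τ, s ≤ t →
          sSup (PSums K i t) ≤ sSup (PSums K i s) + (g t - g s) := by
      intro i g hg s hs t ht hst
      refine csSup_le (hne i t ht.1) ?_
      intro x hx
      obtain ⟨y, hy, m, q, Fsq, hq, hq0, hql, hFsq, rfl⟩ := split hx hs.1 hst
      have h1 := sum_le (τ := τ) q Fsq hq (hq0 ▸ hs.1) (by rw [hql]; exact ht) hFsq hg
      rw [hq0, hql] at h1
      have h2 : y ≤ sSup (PSums K i s) := le_csSup (hbddA i s hs) hy
      linarith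
    have supGe : ∀ F ∈ K, ∀ (i : Fin N), ∀ s ∈ IncDom τ, ∀ t ∈ IncDom τ, s ≤ t →
        sSup (PSums K i s) + (F i t - F i s) ≤ sSup (PSums K i t) := by
      intro F hF i s hs t ht hst
      have h1 : ∀ y ∈ PSums K i s, y ≤ sSup (PSums K i t) - (F i t - F i s) := by
        intro y hy
        have := le_csSup (hbddA i t ht) (append hy hst hF)
        linarith
      have := csSup_le (hne i s hs.1) h1
      linarith
    have supMono : ∀ (i : Fin N), ∀ s ∈ IncDom τ, ∀ t ∈ IncDom τ, s ≤ t →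
        sSup (PSums K i s) ≤ sSup (PSums K i t) := by
      intro i s hs t ht hst
      have h1 := supGe F0 hF0 i s hs t ht hst
      have h2 : F0 i s ≤ F0 i t := (hK hF0 i).2.2.1 hs ht hst
      linarith
    have supZero : ∀ i : Fin N, sSup (PSums K i 0) = 0 := by
      intro i; rw [psums_zero]; exact csSup_singleton 0
    -- key estimates for the infimum candidate
    have infLe : ∀ F ∈ K, ∀ (i : Fin N), ∀ s ∈ IncDom τ, ∀ t ∈ IncDom τ, s ≤ t →
        sInf (PSums K i t) ≤ sInf (PSums K i s) + (F i t - F i s) := by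
      intro F hF i s hs t ht hst
      have h1 : ∀ y ∈ PSums K i s, sInf (PSums K i t) - (F i t - F i s) ≤ y := by
        intro y hy
        have := csInf_le (hbddB i t ht) (append hy hst hF)
        linarith
      have := le_csInf (hne i s hs.1) h1
      linarith
    have infGe : ∀ (i : Fin N) (g : ℝ → ℝ),
        (∀ F ∈ K, ∀ a ∈ IncDom τ, ∀ b ∈ IncDom τ, a ≤ b → g b - g a ≤ F i b - F i a) →
        ∀ s ∈ IncDom τ, ∀ t ∈ IncDom τ, s ≤ t →
          sInf (PSums K i s) + (g t - g s) ≤ sInf (PSums K i t) := by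
      intro i g hg s hs t ht hst
      refine le_csInf (hne i t ht.1) ?_
      intro x hx
      obtain ⟨y, hy, m, q, Fsq, hq, hq0, hql, hFsq, rfl⟩ := split hx hs.1 hst
      have h1 := sum_ge (τ := τ) q Fsq hq (hq0 ▸ hs.1) (by rw [hql]; exact ht) hFsq hg
      rw [hq0, hql] at h1
      have h2 : sInf (PSums K i s) ≤ y := csInf_le (hbddB i s hs) hy
      linarith
    have infMono : ∀ (i : Fin N), ∀ s ∈ IncDom τ, ∀ t ∈ IncDom τ, s ≤ t →
        sInf (PSums K i s) ≤ sInf (PSums K i t) := by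
      intro i s hs t ht hst
      have := infGe i (fun _ => (0:ℝ)) (hGzero i) s hs t ht hst
      simpa using this
    have infZero : ∀ i : Fin N, sInf (PSums K i 0) = 0 := by
      intro i; rw [psums_zero]; exact csInf_singleton 0
    constructor
    · -- supremum
      refine ⟨fun i t => sSup (PSums K i t), ?_, ?_, ?_⟩
      · intro i
        have hincr : ∀ s ∈ IncDom τ, ∀ t ∈ IncDom τ, s ≤ t →
            sSup (PSums K i t) - sSup (PSums K i s) ≤ L i t - L i s := by
          intro s hs t ht hst
          have := supLe i (L i) (hGL i) s hs t ht hst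
          linarith
        refine ⟨supZero i, ?_, fun s hs t ht hst => supMono i s hs t ht hst, hincr⟩
        exact contOn_of_incr_dom (hL i).2.1 (fun s hs t ht hst =>
          ⟨sub_nonneg.2 (supMono i s hs t ht hst), hincr s hs t ht hst⟩)
      · intro F hF i s hs t ht hst
        have := supGe F hF i s hs t ht hst
        linarith
      · intro G hG hub i s hs t ht hst
        have := supLe i (G i) (fun F hF => hub F hF i) s hs t ht hst
        linarith
    · -- infimum
      refine ⟨fun i t => sInf (PSums K i t), ?_, ?_, ?_⟩
      · intro i
        have hincr : ∀ s ∈ IncDom τ, ∀ t ∈ IncDom τ, s ≤ t →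
            sInf (PSums K i t) - sInf (PSums K i s) ≤ L i t - L i s := by
          intro s hs t ht hst
          have h1 := infLe F0 hF0 i s hs t ht hst
          have h2 := hGL i F0 hF0 s hs t ht hst
          linarith
        refine ⟨infZero i, ?_, fun s hs t ht hst => infMono i s hs t ht hst, hincr⟩
        exact contOn_of_incr_dom (hL i).2.1 (fun s hs t ht hst =>
          ⟨sub_nonneg.2 (infMono i s hs t ht hst), hincr s hs t ht hst⟩)
      · intro F hF i s hs t ht hst
        have := infLe F hF i s hs t ht hst
        linarith
      · intro G hG hlb i s hs t ht hst
        have := infGe i (G i) (fun F hF => hlb F hF i) s hs t ht hst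
        linarith
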